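/- Let ρ be a Borel probability measure on ℝ and E_ρ the position observable on L²(ℝ). If the limit of resolution γ_{E_ρ} = inf{α > 0 : E_ρ is α-regular} equals 0, then there exist x̄ ∈ ℝ and a probability measure λ on ℝ with x̄ ∈ supp(λ) such that ρ = ½ δ_{x̄} + ½ λ. -/

import Mathlib

open MeasureTheory Complex
open scoped ENNReal

noncomputable section

/-- `L²(ℝ)` with Lebesgue measure. -/
abbrev L2 : Type := Lp ℂ 2 (volume : Measure ℝ)

namespace Stmt9Aux

lemma opNorm_le_of_ae (T : L2 →L[ℂ] L2) (g : ℝ → ℂ)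
    (hT : ∀ f : L2, (T f : ℝ → ℂ) =ᵐ[volume] fun x => g x * (f : ℝ → ℂ) x)
    (M : ℝ) (hM : 0 ≤ M) (hg : ∀ x, ‖g x‖ ≤ M) : ‖T‖ ≤ M := by
  refine ContinuousLinearMap.opNorm_le_bound T hM (fun f => ?_)
  rw [Lp.norm_def, Lp.norm_def]
  have h1 : eLpNorm (T f) 2 volume ≤ eLpNorm ((M : ℂ) • (f : ℝ → ℂ)) 2 volume := by
    refine eLpNorm_mono_ae ?_
    filter_upwards [hT f] with x hx
    rw [hx]
    simp only [Pi.smul_apply, smul_eq_mul, norm_mul]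
    have : ‖(M:ℂ)‖ = M := by simp [_root_.abs_of_nonneg hM]
    rw [this]
    exact mul_le_mul_of_nonneg_right (hg x) (norm_nonneg _)
  have h2 : eLpNorm ((M : ℂ) • (f : ℝ → ℂ)) 2 volume
      = ‖(M:ℂ)‖₊ * eLpNorm (f : ℝ → ℂ) 2 volume := eLpNorm_const_smul _ _ _ _
  calc (eLpNorm (T f) 2 volume).toReal
      ≤ ((‖(M:ℂ)‖₊ : ℝ≥0∞) * eLpNorm (f : ℝ → ℂ) 2 volume).toReal := by
        refine ENNReal.toReal_mono ?_ (h1.trans_eq h2)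
        exact ENNReal.mul_ne_top (by simp) (Lp.eLpNorm_ne_top f)
    _ = M * (eLpNorm (f : ℝ → ℂ) 2 volume).toReal := by
        rw [ENNReal.toReal_mul]
        congr 1
        simp [_root_.abs_of_nonneg hM]

lemma norm_le_norm_of_ae (f h : L2) (c : ℝ) (hc : 0 ≤ c)
    (hle : ∀ᵐ x ∂(volume : Measure ℝ), c * ‖(f : ℝ → ℂ) x‖ ≤ ‖(h : ℝ → ℂ) x‖) :
    c * ‖f‖ ≤ ‖h‖ := by
  rw [Lp.norm_def, Lp.norm_def]
  have h1 : eLpNorm ((c : ℂ) • (f : ℝ → ℂ)) 2 volume ≤ eLpNorm (h : ℝ → ℂ) 2 volume := by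
    refine eLpNorm_mono_ae ?_
    filter_upwards [hle] with x hx
    have : ‖((c:ℂ) • (f : ℝ → ℂ)) x‖ = c * ‖(f : ℝ → ℂ) x‖ := by
      simp [norm_smul, _root_.abs_of_nonneg hc]
    rw [this]; exact hx
  have h2 : eLpNorm ((c : ℂ) • (f : ℝ → ℂ)) 2 volume
      = ‖(c:ℂ)‖₊ * eLpNorm (f : ℝ → ℂ) 2 volume := eLpNorm_const_smul _ _ _ _
  calc c * (eLpNorm (f : ℝ → ℂ) 2 volume).toReal
      = ((‖(c:ℂ)‖₊ : ℝ≥0∞) * eLpNorm (f : ℝ → ℂ) 2 volume).toReal := by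
        rw [ENNReal.toReal_mul]; congr 1; simp [_root_.abs_of_nonneg hc]
    _ ≤ (eLpNorm (h : ℝ → ℂ) 2 volume).toReal :=
        ENNReal.toReal_mono (Lp.eLpNorm_ne_top h) (h2 ▸ h1)




lemma volume_Icc_ne_top (a b : ℝ) : volume (Set.Icc a b) ≠ ∞ := by
  simp [Real.volume_Icc]

/-- The indicator of `Icc a b` as an element of `L2`. -/
def ind (a b : ℝ) : L2 :=
  indicatorConstLp 2 measurableSet_Icc (volume_Icc_ne_top a b) (1 : ℂ)

lemma ind_coe (a b : ℝ) :
    (ind a b : ℝ → ℂ) =ᵐ[volume] (Set.Icc a b).indicator fun _ => (1 : ℂ) :=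
  indicatorConstLp_coeFn

lemma norm_ind_pos {a b : ℝ} (hab : a < b) : 0 < ‖ind a b‖ := by
  rw [ind, norm_indicatorConstLp (by norm_num) (by norm_num)]
  have h : (volume (Set.Icc a b)).toReal = b - a := by
    rw [Real.volume_Icc, ENNReal.toReal_ofReal (by linarith)]
  rw [measureReal_def, h]
  have h2 : (0:ℝ) < b - a := by linarith
  simpa using Real.rpow_pos_of_pos h2 _

instance : Nontrivial L2 := by
  refine nontrivial_of_ne (ind 0 1) 0 (fun h => ?_)
  have := norm_ind_pos (a := 0) (b := 1) (by norm_num)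
  rw [h, norm_zero] at this
  exact lt_irrefl _ this

lemma isSelfAdjoint_of_ae (T : L2 →L[ℂ] L2) (g : ℝ → ℂ)
    (hT : ∀ f : L2, (T f : ℝ → ℂ) =ᵐ[volume] fun x => g x * (f : ℝ → ℂ) x)
    (hg : ∀ x, (starRingEnd ℂ) (g x) = g x) : IsSelfAdjoint T := by
  rw [ContinuousLinearMap.isSelfAdjoint_iff_isSymmetric]
  intro f h
  show (inner ℂ (T f) h : ℂ) = inner ℂ f (T h)
  rw [MeasureTheory.L2.inner_def, MeasureTheory.L2.inner_def]
  refine integral_congr_ae ?_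
  filter_upwards [hT f, hT h] with x hx hy
  simp only [RCLike.inner_apply, hx, hy, map_mul, hg x]
  ring

lemma exists_real_spectrum (T : L2 →L[ℂ] L2) (hT : IsSelfAdjoint T) (c : ℝ)
    (hc : c ≤ ‖T‖) : ∃ z : ℝ, (z : ℂ) ∈ spectrum ℂ T ∧ c ≤ |z| := by
  obtain ⟨z, hz, hnorm⟩ := spectrum.exists_nnnorm_eq_spectralRadius (a := T)
  have hre := hT.mem_spectrum_eq_re hz
  refine ⟨z.re, by rwa [← hre], ?_⟩
  have h1 : (‖z‖₊ : ℝ≥0∞) = (‖T‖₊ : ℝ≥0∞) := by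
    rw [hnorm, hT.spectralRadius_eq_nnnorm]
  have h2 : ‖z‖ = ‖T‖ := by exact_mod_cast congrArg ENNReal.toReal h1
  have h3 : ‖z‖ = |z.re| := by rw [hre]; simp
  linarith [h3 ▸ h2 ▸ hc]



lemma key (T : L2 →L[ℂ] L2) (g : ℝ → ℝ)
    (hT : ∀ f : L2, (T f : ℝ → ℂ) =ᵐ[volume] fun x => (g x : ℂ) * (f : ℝ → ℂ) x)
    (hg0 : ∀ x, 0 ≤ g x) (hg1 : ∀ x, g x ≤ 1)
    (u v : ℝ) (huv : u < v) (c : ℝ) (hc : 0 ≤ c)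
    (hgK : ∀ x ∈ Set.Icc u v, c ≤ g x) :
    ∃ z : ℝ, (z : ℂ) ∈ spectrum ℂ T ∧ c ≤ z := by
  have hsa : IsSelfAdjoint T :=
    isSelfAdjoint_of_ae T _ hT (fun x => Complex.conj_ofReal _)
  have hTnorm : ‖T‖ ≤ 1 :=
    opNorm_le_of_ae T _ hT 1 zero_le_one (fun x => by
      rw [Complex.norm_real, Real.norm_of_nonneg (hg0 x)]; exact hg1 x)
  have hB : ∀ f : L2, ((T + 1) f : ℝ → ℂ) =ᵐ[volume]
      fun x => ((g x + 1 : ℝ) : ℂ) * (f : ℝ → ℂ) x := by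
    intro f
    have h0 : (T + 1) f = T f + f := rfl
    rw [h0]
    filter_upwards [Lp.coeFn_add (T f) f, hT f] with x hx hx2
    rw [hx]
    simp only [Pi.add_apply, hx2]
    push_cast
    ring
  have hsaB : IsSelfAdjoint (T + 1) := hsa.add (IsSelfAdjoint.one _)
  have hBnorm : (1 + c) ≤ ‖T + 1‖ := by
    have hf : 0 < ‖ind u v‖ := norm_ind_pos huv
    have hlow : (1 + c) * ‖ind u v‖ ≤ ‖(T + 1) (ind u v)‖ := by
      refine norm_le_norm_of_ae _ _ _ (by linarith) ?_
      filter_upwards [hB (ind u v), ind_coe u v] with x hx hx2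
      rw [hx, hx2]
      by_cases hxK : x ∈ Set.Icc u v
      · simp only [Set.indicator_of_mem hxK]
        have h1 : ‖(1:ℂ)‖ = 1 := by simp
        rw [h1, mul_one, norm_mul, h1, mul_one]
        have h2 : ‖((g x + 1 : ℝ) : ℂ)‖ = g x + 1 := by
          rw [Complex.norm_real, Real.norm_of_nonneg (by linarith [hg0 x])]
        rw [h2]
        linarith [hgK x hxK]
      · simp [Set.indicator_of_notMem hxK]
    have := hlow.trans ((T + 1).le_opNorm (ind u v))
    exact le_of_mul_le_mul_right (by linarith) hf
  obtain ⟨w, hw, hwabs⟩ := exists_real_spectrum (T + 1) hsaB (1 + c) hBnorm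
  have hmem : ((w - 1 : ℝ) : ℂ) ∈ spectrum ℂ T := by
    have h1 : (T + 1) = algebraMap ℂ (L2 →L[ℂ] L2) 1 + T := by
      rw [map_one, add_comm]
    rw [h1, ← spectrum.singleton_add_eq] at hw
    obtain ⟨o, ho, t, ht, hot⟩ := hw
    simp only [Set.mem_singleton_iff] at ho
    subst ho
    have h2 : ((w - 1 : ℝ) : ℂ) = t := by push_cast; rw [← hot]; ring
    rwa [h2]
  have habs : ‖((w - 1 : ℝ) : ℂ)‖ ≤ 1 := (spectrum.norm_le_norm_of_mem hmem).trans hTnorm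
  have habs' : |w - 1| ≤ 1 := by rwa [Complex.norm_real, Real.norm_eq_abs] at habs
  have hw0 : 0 ≤ w := by
    rcases abs_le.mp habs' with ⟨h1, _⟩; linarith
  have hcw : 1 + c ≤ w := by rwa [_root_.abs_of_nonneg hw0] at hwabs
  exact ⟨w - 1, hmem, by linarith⟩

/-! ### Multiplication by `x ↦ ρ(Icc (a-x) (b-x))` -/

def gI (ρ : Measure ℝ) (a b : ℝ) : ℝ → ℝ := fun x => (ρ (Set.Icc (a - x) (b - x))).toReal

variable (ρ : Measure ℝ) [IsProbabilityMeasure ρ]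

lemma hT_gI (T : L2 →L[ℂ] L2) (a b : ℝ)
    (h : ∀ f : L2, (T f : ℝ → ℂ) =ᵐ[volume]
      fun x => ((ρ ((· + x) ⁻¹' Set.Icc a b)).toReal : ℂ) * (f : ℝ → ℂ) x) :
    ∀ f : L2, (T f : ℝ → ℂ) =ᵐ[volume]
      fun x => ((gI ρ a b x : ℝ) : ℂ) * (f : ℝ → ℂ) x := by
  intro f
  refine (h f).trans (Filter.Eventually.of_forall fun x => ?_)
  simp only [gI, Set.preimage_add_const_Icc]

lemma gI_nonneg (a b x : ℝ) : 0 ≤ gI ρ a b x := ENNReal.toReal_nonneg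

lemma gI_le_one (a b x : ℝ) : gI ρ a b x ≤ 1 := by
  have h := prob_le_one (μ := ρ) (s := Set.Icc (a - x) (b - x))
  have := ENNReal.toReal_mono ENNReal.one_ne_top h
  simpa [gI] using this

lemma gI_ge (a b u v x : ℝ) (h : Set.Icc u v ⊆ Set.Icc (a - x) (b - x)) :
    (ρ (Set.Icc u v)).toReal ≤ gI ρ a b x :=
  ENNReal.toReal_mono (measure_ne_top ρ _) (measure_mono h)

lemma gI_le (a b x n : ℝ) (h : Set.Icc (a - x) (b - x) ⊆ (Set.Icc (-n) n)ᶜ) :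
    gI ρ a b x ≤ 1 - (ρ (Set.Icc (-n) n)).toReal := by
  have h1 : ρ (Set.Icc (a - x) (b - x)) ≤ ρ (Set.Icc (-n) n)ᶜ := measure_mono h
  rw [prob_compl_eq_one_sub measurableSet_Icc] at h1
  have h2 := ENNReal.toReal_mono (by
    exact ENNReal.sub_ne_top ENNReal.one_ne_top) h1
  rw [ENNReal.toReal_sub_of_le prob_le_one ENNReal.one_ne_top] at h2
  simpa [gI] using h2

lemma one_sub_mem (T : L2 →L[ℂ] L2) (z : ℝ) (hz : (z : ℂ) ∈ spectrum ℂ (1 - T)) :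
    ((1 - z : ℝ) : ℂ) ∈ spectrum ℂ T := by
  have h1 : (1 - T) = algebraMap ℂ (L2 →L[ℂ] L2) 1 - T := by rw [map_one]
  rw [h1, ← spectrum.singleton_sub_eq] at hz
  obtain ⟨o, ho, t, ht, hot⟩ := hz
  simp only [Set.mem_singleton_iff] at ho
  subst ho
  have h2 : ((1 - z : ℝ) : ℂ) = t := by push_cast; rw [← hot]; ring
  rwa [h2]

lemma hT_one_sub (T : L2 →L[ℂ] L2) (g : ℝ → ℝ)
    (hT : ∀ f : L2, (T f : ℝ → ℂ) =ᵐ[volume]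
      fun x => ((g x : ℝ) : ℂ) * (f : ℝ → ℂ) x) :
    ∀ f : L2, ((1 - T) f : ℝ → ℂ) =ᵐ[volume]
      fun x => ((1 - g x : ℝ) : ℂ) * (f : ℝ → ℂ) x := by
  intro f
  have h0 : (1 - T) f = f - T f := rfl
  rw [h0]
  filter_upwards [Lp.coeFn_sub f (T f), hT f] with x hx hx2
  rw [hx]
  simp only [Pi.sub_apply, hx2]
  push_cast
  ring

set_option linter.unusedSectionVars false

/-- Any interval effect whose interval has length `≥ 2n+2`, where `ρ(Icc (-n) n) > 1/2`,
is a regular effect. -/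
lemma regular_of_big (T : L2 →L[ℂ] L2) (a b n : ℝ)
    (hT' : ∀ f : L2, (T f : ℝ → ℂ) =ᵐ[volume]
      fun x => ((ρ ((· + x) ⁻¹' Set.Icc a b)).toReal : ℂ) * (f : ℝ → ℂ) x)
    (hn0 : 0 ≤ n) (hn : 1 / 2 < (ρ (Set.Icc (-n) n)).toReal)
    (hlen : 2 * n + 2 ≤ b - a) :
    (∃ z ∈ spectrum ℂ T, 1 / 2 < z.re) ∧ (∃ z ∈ spectrum ℂ T, z.re < 1 / 2) := by
  have hT := hT_gI ρ T a b hT'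
  set c := (ρ (Set.Icc (-n) n)).toReal with hc
  have hc0 : (0:ℝ) ≤ c := ENNReal.toReal_nonneg
  constructor
  · -- a point of the spectrum above 1/2
    have hgK1 : ∀ x' ∈ Set.Icc (a + n) (b - n), c ≤ gI ρ a b x' := by
      intro x' hx'
      refine gI_ge ρ a b (-n) n x' ?_
      rcases hx' with ⟨h1, h2⟩
      exact Set.Icc_subset_Icc (by linarith) (by linarith)
    obtain ⟨z, hz, hcz⟩ := key T (gI ρ a b) hT (gI_nonneg ρ a b) (gI_le_one ρ a b)
      (a + n) (b - n) (by linarith) c hc0 hgK1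
    exact ⟨z, hz, by simpa using lt_of_lt_of_le hn hcz⟩
  · -- a point of the spectrum below 1/2
    have hgK2 : ∀ x' ∈ Set.Icc (b + n + 1) (b + n + 2), c ≤ 1 - gI ρ a b x' := by
      intro x' hx'
      rcases hx' with ⟨h1, h2⟩
      have hle : gI ρ a b x' ≤ 1 - c := by
        refine gI_le ρ a b x' n ?_
        intro y hy
        rcases hy with ⟨hy1, hy2⟩
        simp only [Set.mem_compl_iff, Set.mem_Icc, not_and, not_le]
        intro h
        linarith
      linarith
    obtain ⟨z, hz, hcz⟩ := key (1 - T) (fun x => 1 - gI ρ a b x) (hT_one_sub T _ hT)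
      (fun x => by show (0:ℝ) ≤ 1 - gI ρ a b x; linarith [gI_le_one ρ a b x])
      (fun x => by show 1 - gI ρ a b x ≤ 1; linarith [gI_nonneg ρ a b x])
      (b + n + 1) (b + n + 2) (by linarith) c hc0 hgK2
    refine ⟨((1 - z : ℝ) : ℂ), one_sub_mem T z hz, ?_⟩
    simp only [Complex.ofReal_re]
    linarith

lemma exists_forall_ball_pos : ∃ p : ℝ, ∀ ε : ℝ, 0 < ε → 0 < ρ (Metric.ball p ε) := by
  by_contra h
  push_neg at h
  have h0 : ρ Set.univ = 0 := by
    refine measure_null_of_locally_null Set.univ (fun x _ => ?_)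
    obtain ⟨ε, hε, hρ⟩ := h x
    exact ⟨Metric.ball x ε, by
      rw [nhdsWithin_univ]; exact Metric.ball_mem_nhds x hε, le_antisymm hρ zero_le⟩
  simp [measure_univ] at h0

/-- An interval effect with `ρ`-values bounded by `1/2` everywhere is a nonzero, non-unit
effect with no spectrum above `1/2`. -/
lemma small_interval (a b : ℝ) (hab : a < b) (p : ℝ)
    (hp : ∀ ε : ℝ, 0 < ε → 0 < ρ (Metric.ball p ε)) (T : L2 →L[ℂ] L2)
    (hT' : ∀ f : L2, (T f : ℝ → ℂ) =ᵐ[volume]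
      fun x => ((ρ ((· + x) ⁻¹' Set.Icc a b)).toReal : ℂ) * (f : ℝ → ℂ) x)
    (hbound : ∀ x, gI ρ a b x ≤ 1 / 2) :
    T ≠ 0 ∧ T ≠ 1 ∧ ¬(∃ z ∈ spectrum ℂ T, 1 / 2 < z.re) := by
  have hT := hT_gI ρ T a b hT'
  set r := b - a with hr
  have hr0 : 0 < r := by simp [hr]; linarith
  set m := (a + b) / 2 with hm
  -- a small interval of translates where `gI` is bounded below
  set c := (ρ (Set.Icc (p - r/4) (p + r/4))).toReal with hc
  have hcpos : 0 < c := by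
    refine ENNReal.toReal_pos ?_ (measure_ne_top ρ _)
    have hsub : Metric.ball p (r/4) ⊆ Set.Icc (p - r/4) (p + r/4) :=
      (Metric.ball_subset_closedBall).trans (by rw [Real.closedBall_eq_Icc])
    have := lt_of_lt_of_le (hp (r/4) (by linarith)) (measure_mono hsub)
    exact fun h => by simp [h] at this
  have hgc : ∀ x' ∈ Set.Icc (m - p - r/4) (m - p + r/4), c ≤ gI ρ a b x' := by
    intro x' hx'
    rcases hx' with ⟨h1, h2⟩
    refine gI_ge ρ a b _ _ x' (Set.Icc_subset_Icc ?_ ?_)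
    · simp only [hm] at h1 ⊢; linarith [hr ▸ h1]
    · simp only [hm] at h2 ⊢; linarith [hr ▸ h2]
  -- T ≠ 0
  have hTne0 : T ≠ 0 := by
    intro hT0
    set f := ind (m - p - r/4) (m - p + r/4) with hf
    have hfpos : 0 < ‖f‖ := norm_ind_pos (by linarith)
    have hlow : c * ‖f‖ ≤ ‖T f‖ := by
      refine norm_le_norm_of_ae _ _ _ hcpos.le ?_
      filter_upwards [hT f, ind_coe (m - p - r/4) (m - p + r/4)] with x hx hx2
      rw [hx, hx2]
      by_cases hxK : x ∈ Set.Icc (m - p - r/4) (m - p + r/4)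
      · simp only [Set.indicator_of_mem hxK, norm_mul]
        have h1 : ‖(1:ℂ)‖ = 1 := by simp
        rw [h1, mul_one, mul_one, Complex.norm_real,
          Real.norm_of_nonneg (gI_nonneg ρ a b x)]
        exact hgc x hxK
      · simp [Set.indicator_of_notMem hxK]
    rw [hT0] at hlow
    simp only [ContinuousLinearMap.zero_apply, norm_zero] at hlow
    nlinarith
  -- T ≠ 1
  have hTne1 : T ≠ 1 := by
    intro hT1
    set f := ind 0 1 with hf
    have hfpos : 0 < ‖f‖ := norm_ind_pos one_pos
    have hcoe : ((T f - f : L2) : ℝ → ℂ) =ᵐ[volume]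
        fun x => ((gI ρ a b x - 1 : ℝ) : ℂ) * (f : ℝ → ℂ) x := by
      filter_upwards [Lp.coeFn_sub (T f) f, hT f] with x hx hx2
      rw [hx]
      simp only [Pi.sub_apply, hx2]
      push_cast
      ring
    have hlow : (1/2) * ‖f‖ ≤ ‖T f - f‖ := by
      refine norm_le_norm_of_ae _ _ _ (by norm_num) ?_
      filter_upwards [hcoe] with x hx
      rw [hx, norm_mul, Complex.norm_real, Real.norm_eq_abs]
      have h1 : (1:ℝ)/2 ≤ |gI ρ a b x - 1| := by
        rw [abs_sub_comm, _root_.abs_of_nonneg (by linarith [hbound x] : (0:ℝ) ≤ 1 - gI ρ a b x)]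
        linarith [hbound x]
      exact mul_le_mul_of_nonneg_right h1 (norm_nonneg _)
    rw [hT1] at hlow
    simp only [ContinuousLinearMap.one_apply, sub_self, norm_zero] at hlow
    nlinarith
  -- no spectrum above 1/2
  refine ⟨hTne0, hTne1, ?_⟩
  rintro ⟨z, hz, hzre⟩
  have hnorm : ‖T‖ ≤ 1/2 :=
    opNorm_le_of_ae T _ hT (1/2) (by norm_num) (fun x => by
      rw [Complex.norm_real, Real.norm_of_nonneg (gI_nonneg ρ a b x)]
      exact hbound x)
  have h1 : ‖z‖ ≤ 1/2 := (spectrum.norm_le_norm_of_mem hz).trans hnorm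
  have h2 : z.re ≤ ‖z‖ := (le_abs_self z.re).trans (Complex.abs_re_le_norm z)
  linarith

lemma half_lt_iff (S : Set ℝ) : (2⁻¹ : ℝ≥0∞) < ρ S ↔ 1 / 2 < (ρ S).toReal := by
  rw [← ENNReal.toReal_lt_toReal (by norm_num) (measure_ne_top ρ S)]
  norm_num

lemma exists_N : ∃ n : ℕ, 1 / 2 < (ρ (Set.Icc (-(n:ℝ)) (n:ℝ))).toReal := by
  have hmono : Monotone (fun n : ℕ => Set.Icc (-(n:ℝ)) (n:ℝ)) := fun i j hij =>
    Set.Icc_subset_Icc (neg_le_neg (Nat.cast_le.mpr hij)) (Nat.cast_le.mpr hij)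
  have hU : ⋃ n : ℕ, Set.Icc (-(n:ℝ)) (n:ℝ) = Set.univ := by
    ext y
    simp only [Set.mem_iUnion, Set.mem_Icc, Set.mem_univ, iff_true]
    obtain ⟨n, hn⟩ := exists_nat_ge |y|
    exact ⟨n, (abs_le.mp hn).1, (abs_le.mp hn).2⟩
  have htend := tendsto_measure_iUnion_atTop (μ := ρ) hmono
  rw [hU, measure_univ] at htend
  have hev : ∀ᶠ n : ℕ in Filter.atTop, (2⁻¹ : ℝ≥0∞) < ρ (Set.Icc (-(n:ℝ)) (n:ℝ)) :=
    htend.eventually (eventually_gt_nhds (by norm_num))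
  obtain ⟨n, hn⟩ := hev.exists
  exact ⟨n, (half_lt_iff ρ _).mp hn⟩

end Stmt9Aux

/-- `T` is the operator of multiplication by the bounded function `x ↦ ρ(X − x)`. -/
def IsMulByMeas (ρ : Measure ℝ) (X : Set ℝ) (T : L2 →L[ℂ] L2) : Prop :=
  ∀ f : L2, (T f : ℝ → ℂ) =ᵐ[volume]
    fun x => ((ρ ((· + x) ⁻¹' X)).toReal : ℂ) * (f : ℝ → ℂ) x

/-- An effect is regular if its spectrum extends both strictly above and strictly
below `1/2`. -/
def IsRegularEffect (A : L2 →L[ℂ] L2) : Prop :=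
  (∃ z ∈ spectrum ℂ A, 1 / 2 < z.re) ∧ (∃ z ∈ spectrum ℂ A, z.re < 1 / 2)

/-- `E` is `α`-regular: every nontrivial effect `E(I_{x;r})`, `r ≥ α`, is regular. -/
def AlphaRegular (E : Set ℝ → (L2 →L[ℂ] L2)) (α : ℝ) : Prop :=
  ∀ x r : ℝ, α ≤ r →
    E (Set.Icc (x - r / 2) (x + r / 2)) ≠ 0 →
    E (Set.Icc (x - r / 2) (x + r / 2)) ≠ 1 →
    IsRegularEffect (E (Set.Icc (x - r / 2) (x + r / 2)))

lemma exists_center (ρ : Measure ℝ) [IsProbabilityMeasure ρ]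
    (E : Set ℝ → (L2 →L[ℂ] L2))
    (hE : ∀ X : Set ℝ, MeasurableSet X → IsMulByMeas ρ X (E X))
    (hγ : sInf {α : ℝ | 0 < α ∧ AlphaRegular E α} = 0)
    (α : ℝ) (hα : 0 < α) :
    ∃ x : ℝ, 1 / 2 < (ρ (Set.Icc (x - α / 2) (x + α / 2))).toReal := by
  by_contra hno
  push_neg at hno
  obtain ⟨n, hn⟩ := Stmt9Aux.exists_N ρ
  have hmem : (2 * (n:ℝ) + 2) ∈ {α : ℝ | 0 < α ∧ AlphaRegular E α} := by
    constructor
    · positivity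
    · intro x r hr _ _
      exact Stmt9Aux.regular_of_big ρ (E _) (x - r/2) (x + r/2) n
        (hE _ measurableSet_Icc) (Nat.cast_nonneg n) hn (by linarith)
  have hlt : sInf {α : ℝ | 0 < α ∧ AlphaRegular E α} < α := by rw [hγ]; exact hα
  obtain ⟨β, hβS, hβα⟩ := (csInf_lt_iff ⟨0, fun y hy => hy.1.le⟩ ⟨_, hmem⟩).mp hlt
  obtain ⟨p, hp⟩ := Stmt9Aux.exists_forall_ball_pos ρ
  have hbound : ∀ x, Stmt9Aux.gI ρ (p - α/2) (p + α/2) x ≤ 1/2 := by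
    intro x
    have h := hno (p - x)
    have hset : Set.Icc (p - α/2 - x) (p + α/2 - x)
        = Set.Icc ((p - x) - α/2) ((p - x) + α/2) := by
      congr 1 <;> ring
    show (ρ (Set.Icc (p - α/2 - x) (p + α/2 - x))).toReal ≤ 1/2
    rw [hset]; exact h
  obtain ⟨h0, h1, h2⟩ := Stmt9Aux.small_interval ρ (p - α/2) (p + α/2) (by linarith) p hp
    (E _) (hE _ measurableSet_Icc) hbound
  exact h2 (hβS.2 p α (le_of_lt hβα) h0 h1).1

/-- if the limit of resolution `γ_{E_ρ} = inf{α > 0 : E_ρ is α-regular}`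
equals `0`, then `ρ = ½ δ_{x̄} + ½ λ` for some `x̄ ∈ supp λ`. -/
theorem stmt9 (ρ : Measure ℝ) [IsProbabilityMeasure ρ]
    (E : Set ℝ → (L2 →L[ℂ] L2))
    (hE : ∀ X : Set ℝ, MeasurableSet X → IsMulByMeas ρ X (E X))
    (hγ : sInf {α : ℝ | 0 < α ∧ AlphaRegular E α} = 0) :
    ∃ (xbar : ℝ) (lam : Measure ℝ), IsProbabilityMeasure lam ∧
      (∀ ε : ℝ, 0 < ε → 0 < lam (Metric.ball xbar ε)) ∧
      ρ = (1 / 2 : ℝ≥0∞) • Measure.dirac xbar + (1 / 2 : ℝ≥0∞) • lam := by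
  classical
  have hseq : ∀ k : ℕ, ∃ x : ℝ,
      1/2 < (ρ (Set.Icc (x - (1/(k+1:ℝ))/2) (x + (1/(k+1:ℝ))/2))).toReal := fun k =>
    exists_center ρ E hE hγ (1/(k+1:ℝ)) (by positivity)
  choose xs hxs using hseq
  obtain ⟨n, hn⟩ := Stmt9Aux.exists_N ρ
  -- the centers are bounded
  have hbd : ∀ k, xs k ∈ Set.Icc (-((n:ℝ)+1)) ((n:ℝ)+1) := by
    intro k
    by_contra hk
    simp only [Set.mem_Icc, not_and_or, not_le] at hk
    have hhalf : (1/(k+1:ℝ))/2 ≤ 1/2 := by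
      have h1 : (1:ℝ) ≤ (k:ℝ)+1 := by linarith [Nat.cast_nonneg (α := ℝ) k]
      have := one_div_le_one_div_of_le one_pos h1
      simp only [one_div_one] at this
      linarith
    have hdisj : Disjoint (Set.Icc (xs k - (1/(k+1:ℝ))/2) (xs k + (1/(k+1:ℝ))/2))
        (Set.Icc (-(n:ℝ)) n) := by
      rw [Set.disjoint_left]
      rintro y ⟨hy1, hy2⟩ hmem
      rcases hmem with ⟨hz1, hz2⟩
      rcases hk with hk | hk
      · linarith
      · linarith
    have hsum := measure_union hdisj measurableSet_Icc (μ := ρ)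
    have hle : ρ (Set.Icc (xs k - (1/(k+1:ℝ))/2) (xs k + (1/(k+1:ℝ))/2)
        ∪ Set.Icc (-(n:ℝ)) n) ≤ 1 := prob_le_one
    rw [hsum] at hle
    have htr := ENNReal.toReal_mono ENNReal.one_ne_top hle
    rw [ENNReal.toReal_add (measure_ne_top ρ _) (measure_ne_top ρ _)] at htr
    simp only [ENNReal.toReal_one] at htr
    linarith [hxs k, hn]
  obtain ⟨q, _, φ, hφ, htend⟩ := (isCompact_Icc (a := -((n:ℝ)+1)) (b := (n:ℝ)+1)).tendsto_subseq hbd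
  -- every ball around q has measure > 1/2
  have hA : ∀ ε : ℝ, 0 < ε → (2⁻¹ : ℝ≥0∞) < ρ (Metric.ball q ε) := by
    intro ε hε
    obtain ⟨M, hM⟩ := exists_nat_one_div_lt (show (0:ℝ) < ε/2 by linarith)
    obtain ⟨K, hK⟩ := Metric.tendsto_atTop.mp htend (ε/2) (by linarith)
    set k := max M K with hk
    have h1 : dist (xs (φ k)) q < ε/2 := hK k (le_max_right _ _)
    have h2 : 1/((φ k : ℝ)+1) ≤ 1/((M:ℝ)+1) := by
      refine one_div_le_one_div_of_le (by positivity) ?_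
      have : M ≤ φ k := le_trans (le_max_left M K) (hφ.le_apply)
      exact_mod_cast Nat.succ_le_succ this
    have hsub : Set.Icc (xs (φ k) - (1/((φ k : ℝ)+1))/2) (xs (φ k) + (1/((φ k : ℝ)+1))/2)
        ⊆ Metric.ball q ε := by
      intro y hy
      rcases hy with ⟨hy1, hy2⟩
      rw [Metric.mem_ball, Real.dist_eq]
      have hd : dist (xs (φ k)) q = |xs (φ k) - q| := Real.dist_eq _ _
      rw [hd] at h1
      rcases abs_lt.mp h1 with ⟨ha, hb⟩
      rw [abs_lt]
      constructor <;> nlinarith [h2, hM]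
    exact lt_of_lt_of_le ((Stmt9Aux.half_lt_iff ρ _).mpr (hxs (φ k))) (measure_mono hsub)
  -- the point q is an atom of mass ≥ 1/2
  have hsing : (⋂ j : ℕ, Metric.closedBall q (1/(j+1:ℝ))) = {q} := by
    ext y
    simp only [Set.mem_iInter, Metric.mem_closedBall, Set.mem_singleton_iff]
    constructor
    · intro h
      have h0 : dist y q ≤ 0 := by
        refine ge_of_tendsto tendsto_one_div_add_atTop_nhds_zero_nat ?_
        exact Filter.Eventually.of_forall fun j => h j
      have := dist_nonneg (x := y) (y := q)
      rw [← dist_eq_zero]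
      linarith
    · intro h
      subst h
      intro j
      simp [dist_self]
      positivity
  have hB : (2⁻¹ : ℝ≥0∞) ≤ ρ {q} := by
    have hanti : Antitone (fun j : ℕ => Metric.closedBall q (1/(j+1:ℝ))) := by
      intro i j hij
      refine Metric.closedBall_subset_closedBall ?_
      refine one_div_le_one_div_of_le (by positivity) ?_
      exact_mod_cast Nat.succ_le_succ hij
    have hiter := tendsto_measure_iInter_atTop (μ := ρ)
      (fun j => measurableSet_closedBall.nullMeasurableSet) hanti
      ⟨0, measure_ne_top ρ _⟩
    rw [hsing] at hiter
    refine ge_of_tendsto hiter (Filter.Eventually.of_forall fun j => ?_)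
    exact le_trans (hA (1/(j+1:ℝ)) (by positivity)).le
      (measure_mono Metric.ball_subset_closedBall)
  set m := ρ {q} with hm
  have hm1 : m ≤ 1 := prob_le_one
  have h2m : 1 ≤ 2 * m := by
    calc (1:ℝ≥0∞) = 2 * 2⁻¹ := (ENNReal.mul_inv_cancel two_ne_zero ENNReal.ofNat_ne_top).symm
    _ ≤ 2 * m := mul_le_mul_right hB 2
  have h2m2 : 2 * m ≤ 2 := by
    calc (2:ℝ≥0∞) * m ≤ 2 * 1 := mul_le_mul_right hm1 2
    _ = 2 := by norm_num
  refine ⟨q, (2 : ℝ≥0∞) • ρ.restrict {q}ᶜ + (2 * m - 1) • Measure.dirac q, ?_, ?_, ?_⟩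
  · constructor
    rw [Measure.add_apply, Measure.smul_apply, Measure.smul_apply,
      Measure.restrict_apply MeasurableSet.univ, Set.univ_inter, measure_univ,
      smul_eq_mul, smul_eq_mul, mul_one,
      prob_compl_eq_one_sub (measurableSet_singleton q)]
    have hmul : (2:ℝ≥0∞) * (1 - m) = 2 - 2 * m := by
      rw [ENNReal.mul_sub (fun _ _ => ENNReal.ofNat_ne_top), mul_one]
    rw [hmul, tsub_add_tsub_cancel h2m2 h2m, ← one_add_one_eq_two,
      ENNReal.add_sub_cancel_right ENNReal.one_ne_top]
  · intro ε hε
    rcases lt_or_eq_of_le hB with hlt | heq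
    · have hpos : 0 < 2 * m - 1 := by
        rw [tsub_pos_iff_lt]
        calc (1:ℝ≥0∞) = 2 * 2⁻¹ := (ENNReal.mul_inv_cancel two_ne_zero ENNReal.ofNat_ne_top).symm
        _ < 2 * m := by
            rw [ENNReal.mul_lt_mul_iff_right (by norm_num) ENNReal.ofNat_ne_top]
            exact hlt
      have hd : Measure.dirac q (Metric.ball q ε) = 1 :=
        Measure.dirac_apply_of_mem (Metric.mem_ball_self hε)
      calc (0:ℝ≥0∞) < (2 * m - 1) * 1 := by simpa using hpos
      _ = ((2 * m - 1) • Measure.dirac q) (Metric.ball q ε) := by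
          rw [Measure.smul_apply, smul_eq_mul, hd]
      _ ≤ _ := Measure.le_add_left le_rfl _
    · have hball : m < ρ (Metric.ball q ε) := by
        rw [← heq]; exact hA ε hε
      have hdiff : 0 < ρ (Metric.ball q ε \ {q}) := by
        rw [measure_diff (Set.singleton_subset_iff.mpr (Metric.mem_ball_self hε))
          (measurableSet_singleton q).nullMeasurableSet (measure_ne_top ρ _)]
        exact tsub_pos_iff_lt.mpr hball
      have hrw : ρ.restrict {q}ᶜ (Metric.ball q ε) = ρ (Metric.ball q ε \ {q}) := by
        rw [Measure.restrict_apply measurableSet_ball, ← Set.diff_eq]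
      calc (0:ℝ≥0∞) < 2 * ρ (Metric.ball q ε \ {q}) :=
          ENNReal.mul_pos (by norm_num) hdiff.ne'
      _ = ((2:ℝ≥0∞) • ρ.restrict {q}ᶜ) (Metric.ball q ε) := by
          rw [Measure.smul_apply, smul_eq_mul, hrw]
      _ ≤ _ := Measure.le_add_right le_rfl _
  · ext s hs
    rw [Measure.add_apply, Measure.smul_apply, Measure.smul_apply, smul_eq_mul, smul_eq_mul,
      Measure.add_apply, Measure.smul_apply, Measure.smul_apply, smul_eq_mul, smul_eq_mul,
      Measure.restrict_apply hs]
    have hhalf2 : (1/2 : ℝ≥0∞) * 2 = 1 := by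
      rw [one_div, ENNReal.inv_mul_cancel two_ne_zero ENNReal.ofNat_ne_top]
    have hkey : (1/2 : ℝ≥0∞) * Measure.dirac q s
        + (1/2 : ℝ≥0∞) * (2 * ρ (s ∩ {q}ᶜ) + (2 * m - 1) * Measure.dirac q s)
        = ρ (s ∩ {q}ᶜ) + m * Measure.dirac q s := by
      have e3 : (1/2:ℝ≥0∞) + (1/2) * (2 * m - 1) = m := by
        nth_rewrite 1 [← mul_one (1/2:ℝ≥0∞)]
        rw [← mul_add, add_comm 1 (2*m-1), tsub_add_cancel_of_le h2m, ← mul_assoc,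
          hhalf2, one_mul]
      rw [mul_add, ← mul_assoc, hhalf2, one_mul, add_left_comm, ← mul_assoc, ← add_mul, e3]
    rw [hkey]
    by_cases hq : q ∈ s
    · rw [Measure.dirac_apply_of_mem hq, mul_one]
      have := measure_inter_add_diff s (measurableSet_singleton q) (μ := ρ)
      rw [Set.inter_eq_right.mpr (Set.singleton_subset_iff.mpr hq)] at this
      rw [← this, Set.diff_eq, ← hm, add_comm]
    · rw [Measure.dirac_apply' q hs, Set.indicator_of_notMem hq, mul_zero, add_zero,
        Set.inter_eq_left.mpr (Set.subset_compl_singleton_iff.mpr hq)]
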